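/- Let P be a simple thin polyomino with the S-property that is not a single cell, let (I,J,P^I) be a collapse datum, and suppose additionally the S-property holds. Then the maximal inner interval I has exactly two cells. -/
import Mathlib


open Polynomial

/-- A cell, identified with its lower-left lattice corner. -/
abbrev Cell := ℤ × ℤ

/-- Two cells are neighbours if they share an edge. -/
def Adj (c d : Cell) : Prop := |c.1 - d.1| + |c.2 - d.2| = 1

/-- `b` is reachable from `a` by a chain of neighbouring cells inside `P`. -/
def ReachIn (P : Finset Cell) (a b : Cell) : Prop :=
  Relation.ReflTransGen (fun x y => x ∈ P ∧ y ∈ P ∧ Adj x y) a b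

def IsConnectedSet (P : Finset Cell) : Prop := ∀ a ∈ P, ∀ b ∈ P, ReachIn P a b

/-- A polyomino: a nonempty finite edge-connected collection of cells. -/
def IsPolyomino (P : Finset Cell) : Prop := P.Nonempty ∧ IsConnectedSet P

/-- Simply connected: the complement of `P` in `ℤ²` is connected. -/
def IsSimple (P : Finset Cell) : Prop :=
  ∀ a b : Cell, a ∉ P → b ∉ P →
    Relation.ReflTransGen (fun x y => x ∉ P ∧ y ∉ P ∧ Adj x y) a b

/-- Thin: no 2×2 square of cells. -/
def IsThin (P : Finset Cell) : Prop :=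
  ¬ ∃ p : Cell, p ∈ P ∧ (p.1 + 1, p.2) ∈ P ∧ (p.1, p.2 + 1) ∈ P ∧ (p.1 + 1, p.2 + 1) ∈ P

def IsHorizInterval (I : Finset Cell) : Prop :=
  ∃ j a b : ℤ, a ≤ b ∧ I = (Finset.Icc a b).image (fun x => ((x, j) : Cell))

def IsVertInterval (I : Finset Cell) : Prop :=
  ∃ i a b : ℤ, a ≤ b ∧ I = (Finset.Icc a b).image (fun y => ((i, y) : Cell))

/-- An inner interval of `P`: a horizontal or vertical strip of cells contained in `P`. -/
def IsInnerInterval (P I : Finset Cell) : Prop :=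
  (IsHorizInterval I ∨ IsVertInterval I) ∧ I ⊆ P

/-- A maximal inner interval of `P`. -/
def IsMaxInterval (P I : Finset Cell) : Prop :=
  IsInnerInterval P I ∧ ∀ I', IsInnerInterval P I' → I ⊆ I' → I' = I

/-- A single cell: a cell belonging to exactly one maximal inner interval. -/
def IsSingleCell (P : Finset Cell) (c : Cell) : Prop :=
  c ∈ P ∧ ∃! I, IsMaxInterval P I ∧ c ∈ I

/-- The S-property: every maximal inner interval has exactly one single cell. -/
def SProperty (P : Finset Cell) : Prop :=
  ∀ I, IsMaxInterval P I → ∃! c, c ∈ I ∧ IsSingleCell P c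

/-- A rook configuration: cells of `P`, pairwise not in a common inner interval. -/
def IsRookConfig (P S : Finset Cell) : Prop :=
  S ⊆ P ∧ ∀ c ∈ S, ∀ d ∈ S, c ≠ d → ¬ ∃ I, IsInnerInterval P I ∧ c ∈ I ∧ d ∈ I

open scoped Classical in
/-- The rook polynomial of `P`. -/
noncomputable def rookPoly (P : Finset Cell) : Polynomial ℤ :=
  ∑ S ∈ P.powerset.filter (fun S => IsRookConfig P S), (X : Polynomial ℤ) ^ S.card

/-- The rook number: the degree of the rook polynomial. -/
noncomputable def rookNumber (P : Finset Cell) : ℕ := (rookPoly P).natDegree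

open scoped Classical in
/-- Generating polynomial of rook configurations of `P` avoiding all cells of `A`. -/
noncomputable def rookPolyAvoid (P A : Finset Cell) : Polynomial ℤ :=
  ∑ S ∈ P.powerset.filter (fun S => IsRookConfig P S ∧ Disjoint S A),
    (X : Polynomial ℤ) ^ S.card

open scoped Classical in
/-- An end-cell of an interval: it has exactly one neighbour inside the interval. -/
noncomputable def IsEndCell (I : Finset Cell) (c : Cell) : Prop :=
  c ∈ I ∧ (I.filter (fun d => Adj c d)).card = 1

/-- A collapse datum `(I, J, P^I)` on a polyomino `P`. -/
def IsCollapseDatum (P I J PI : Finset Cell) : Prop :=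
  IsMaxInterval P I ∧ IsMaxInterval P J ∧
  (∃ c, I ∩ J = {c}) ∧
  (∀ J', IsMaxInterval P J' → (∃ c, I ∩ J' = {c}) → J' = J) ∧
  PI ⊆ J ∧ ¬ (I ∩ J ⊆ PI) ∧ IsConnectedSet PI ∧
  (P \ (I ∪ PI)).Nonempty ∧ IsConnectedSet (P \ (I ∪ PI))

/-- The second end-cell of `J` in a collapse datum: the end-cell of `J` other than
the first end-cell (which is `I ∩ J` if `P^I = ∅`, and the cell of `P^I` otherwise). -/
noncomputable def IsSecondEndCell (I J PI : Finset Cell) (c : Cell) : Prop :=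
  IsEndCell J c ∧ ((PI = ∅ ∧ c ∉ I) ∨ (PI ≠ ∅ ∧ c ∉ PI))

open scoped Classical in
/-- The neighbours of a cell `c` inside `P`. -/
noncomputable def nbrs (P : Finset Cell) (c : Cell) : Finset Cell :=
  P.filter (fun d => Adj c d)

open scoped Classical in
/-- The connected component of `x` in `S`. -/
noncomputable def componentOf (S : Finset Cell) (x : Cell) : Finset Cell :=
  S.filter (fun y => ReachIn S x y)

/-- A path of cells in `P` from `c` to `d`: pairwise distinct, consecutive neighbours. -/
def IsCellPath (P : Finset Cell) (l : List Cell) (c d : Cell) : Prop :=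
  l ≠ [] ∧ l.head? = some c ∧ l.getLast? = some d ∧ l.Nodup ∧
    (∀ x ∈ l, x ∈ P) ∧ l.Chain' Adj

lemma adj_irrefl (c : Cell) : ¬ Adj c c := by simp [Adj]

lemma horiz_union {I K : Finset Cell} (hI : IsHorizInterval I) (hK : IsHorizInterval K)
    {d : Cell} (hdI : d ∈ I) (hdK : d ∈ K) : IsHorizInterval (I ∪ K) := by
  obtain ⟨j, a, b, hab, rfl⟩ := hI
  obtain ⟨j', a', b', hab', rfl⟩ := hK
  simp only [Finset.mem_image, Finset.mem_Icc] at hdI hdK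
  obtain ⟨x, hx, hxd⟩ := hdI
  obtain ⟨x', hx', hxd'⟩ := hdK
  have h := hxd.trans hxd'.symm
  simp only [Prod.ext_iff] at h
  obtain ⟨hxx, hjj⟩ := h
  refine ⟨j, min a a', max b b', by omega, ?_⟩
  ext p
  simp only [Finset.mem_union, Finset.mem_image, Finset.mem_Icc, ← hjj]
  constructor
  · rintro (⟨y, hy, rfl⟩ | ⟨y, hy, rfl⟩)
    · exact ⟨y, by omega, rfl⟩
    · exact ⟨y, by omega, by rw [hjj]⟩
  · rintro ⟨y, hy, rfl⟩
    by_cases hc : a ≤ y ∧ y ≤ b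
    · exact Or.inl ⟨y, hc, rfl⟩
    · exact Or.inr ⟨y, by omega, by rw [hjj]⟩

lemma vert_union {I K : Finset Cell} (hI : IsVertInterval I) (hK : IsVertInterval K)
    {d : Cell} (hdI : d ∈ I) (hdK : d ∈ K) : IsVertInterval (I ∪ K) := by
  obtain ⟨j, a, b, hab, rfl⟩ := hI
  obtain ⟨j', a', b', hab', rfl⟩ := hK
  simp only [Finset.mem_image, Finset.mem_Icc] at hdI hdK
  obtain ⟨x, hx, hxd⟩ := hdI
  obtain ⟨x', hx', hxd'⟩ := hdK
  have h := hxd.trans hxd'.symm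
  simp only [Prod.ext_iff] at h
  obtain ⟨hjj, hxx⟩ := h
  refine ⟨j, min a a', max b b', by omega, ?_⟩
  ext p
  simp only [Finset.mem_union, Finset.mem_image, Finset.mem_Icc]
  constructor
  · rintro (⟨y, hy, rfl⟩ | ⟨y, hy, rfl⟩)
    · exact ⟨y, by omega, rfl⟩
    · exact ⟨y, by omega, by rw [hjj]⟩
  · rintro ⟨y, hy, rfl⟩
    by_cases hc : a ≤ y ∧ y ≤ b
    · exact Or.inl ⟨y, hc, rfl⟩
    · exact Or.inr ⟨y, by omega, by rw [hjj]⟩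

lemma horiz_vert_inter {I K : Finset Cell} (hI : IsHorizInterval I) (hK : IsVertInterval K)
    {p q : Cell} (hpI : p ∈ I) (hpK : p ∈ K) (hqI : q ∈ I) (hqK : q ∈ K) : p = q := by
  obtain ⟨j, a, b, hab, rfl⟩ := hI
  obtain ⟨i, a', b', hab', rfl⟩ := hK
  simp only [Finset.mem_image, Finset.mem_Icc] at hpI hpK hqI hqK
  obtain ⟨x1, _, hp1⟩ := hpI
  obtain ⟨y1, _, hp2⟩ := hpK
  obtain ⟨x2, _, hq1⟩ := hqI
  obtain ⟨y2, _, hq2⟩ := hqK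
  have : p.1 = i := by rw [← hp2]
  have : p.2 = j := by rw [← hp1]
  have : q.1 = i := by rw [← hq2]
  have : q.2 = j := by rw [← hq1]
  apply Prod.ext <;> omega

/-- The key step: in a collapse datum, every cell of `I` other than the intersection
cell `c` is a single cell of `P`. -/
lemma collapse_single_cells {P I J PI : Finset Cell} (hcd : IsCollapseDatum P I J PI)
    {c : Cell} (hIJ : I ∩ J = {c}) {d : Cell} (hdI : d ∈ I) (hdc : d ≠ c) :
    IsSingleCell P d := by
  obtain ⟨hImax, hJmax, -, hJuniq, -⟩ := hcd
  refine ⟨hImax.1.2 hdI, I, ⟨hImax, hdI⟩, ?_⟩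
  rintro K ⟨hKmax, hdK⟩
  by_contra hne
  have same : ∀ (h : IsInnerInterval P (I ∪ K)), False := by
    intro h
    have h1 : I ∪ K = I := hImax.2 _ h Finset.subset_union_left
    have h2 : I ∪ K = K := hKmax.2 _ h Finset.subset_union_right
    exact hne (h2.symm.trans h1)
  have cross : (∀ p ∈ I, p ∈ K → ∀ q ∈ I, q ∈ K → p = q) → False := by
    intro h
    have hIK : I ∩ K = {d} := by
      ext p
      simp only [Finset.mem_inter, Finset.mem_singleton]
      constructor
      · rintro ⟨h1, h2⟩; exact h p h1 h2 d hdI hdK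
      · rintro rfl; exact ⟨hdI, hdK⟩
    have : K = J := hJuniq K hKmax ⟨d, hIK⟩
    subst this
    have : d ∈ I ∩ K := by rw [hIK]; exact Finset.mem_singleton_self d
    rw [hIJ] at this
    exact hdc (Finset.mem_singleton.1 this)
  rcases hImax.1.1 with hIo | hIo <;> rcases hKmax.1.1 with hKo | hKo
  · exact same ⟨Or.inl (horiz_union hIo hKo hdI hdK), Finset.union_subset hImax.1.2 hKmax.1.2⟩
  · exact cross (fun p hp hp' q hq hq' => horiz_vert_inter hIo hKo hp hp' hq hq')
  · exact cross (fun p hp hp' q hq hq' => (horiz_vert_inter hKo hIo hp' hp hq' hq))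
  · exact same ⟨Or.inr (vert_union hIo hKo hdI hdK), Finset.union_subset hImax.1.2 hKmax.1.2⟩

/-- For a simple thin polyomino with the S-property that is not a cell, the interval `I`
of any collapse datum has exactly two cells. -/
theorem collapse_interval_card_two (P I J PI : Finset Cell) (hP : IsPolyomino P)
    (hs : IsSimple P) (ht : IsThin P) (hS : SProperty P)
    (hcell : ¬ ∃ c : Cell, P = {c})
    (hcd : IsCollapseDatum P I J PI) : I.card = 2 := by
  obtain ⟨c, hIJ⟩ := hcd.2.2.1
  have hcI : c ∈ I := by
    have : c ∈ I ∩ J := by rw [hIJ]; exact Finset.mem_singleton_self c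
    exact (Finset.mem_inter.1 this).1
  have hcP : c ∈ P := hcd.1.1.2 hcI
  -- Step 1: I has a cell different from c
  have h2 : ∃ d ∈ I, d ≠ c := by
    by_contra h
    push_neg at h
    have hIc : I = {c} := by
      apply Finset.eq_singleton_iff_unique_mem.2 ⟨hcI, h⟩
    -- P has another cell
    have : ∃ b ∈ P, b ≠ c := by
      by_contra hb
      push_neg at hb
      exact hcell ⟨c, Finset.eq_singleton_iff_unique_mem.2 ⟨hcP, hb⟩⟩
    obtain ⟨b, hbP, hbc⟩ := this
    have hreach : ReachIn P c b := hP.2 c hcP b hbP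
    rcases Relation.ReflTransGen.cases_head hreach with heq | ⟨y, ⟨-, hyP, hadj⟩, -⟩
    · exact hbc heq.symm
    · have hyc : y ≠ c := by rintro rfl; exact adj_irrefl y hadj
      -- build the inner interval {c, y}
      have hadj' : (c.1 = y.1 ∧ (c.2 - y.2 = 1 ∨ y.2 - c.2 = 1)) ∨
          (c.2 = y.2 ∧ (c.1 - y.1 = 1 ∨ y.1 - c.1 = 1)) := by
        have h1 := abs_cases (c.1 - y.1)
        have h2 := abs_cases (c.2 - y.2)
        unfold Adj at hadj
        omega
      have hinner : IsInnerInterval P ({c, y} : Finset Cell) := by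
        constructor
        · rcases hadj' with ⟨he, hd | hd⟩ | ⟨he, hd | hd⟩
          · right
            refine ⟨c.1, y.2, c.2, by omega, ?_⟩
            ext p
            simp only [Finset.mem_insert, Finset.mem_singleton, Finset.mem_image,
              Finset.mem_Icc]
            constructor
            · rintro (rfl | rfl)
              · exact ⟨p.2, by omega, rfl⟩
              · exact ⟨p.2, by omega, by rw [he]⟩
            · rintro ⟨t, ht, rfl⟩
              by_cases hty : t = c.2
              · left; rw [hty]
              · right
                have h3 : t = y.2 := by omega
                rw [h3, he]
          · right
            refine ⟨c.1, c.2, y.2, by omega, ?_⟩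
            ext p
            simp only [Finset.mem_insert, Finset.mem_singleton, Finset.mem_image,
              Finset.mem_Icc]
            constructor
            · rintro (rfl | rfl)
              · exact ⟨p.2, by omega, rfl⟩
              · exact ⟨p.2, by omega, by rw [he]⟩
            · rintro ⟨t, ht, rfl⟩
              by_cases hty : t = c.2
              · left; rw [hty]
              · right
                have h3 : t = y.2 := by omega
                rw [h3, he]
          · left
            refine ⟨c.2, y.1, c.1, by omega, ?_⟩
            ext p
            simp only [Finset.mem_insert, Finset.mem_singleton, Finset.mem_image,
              Finset.mem_Icc]
            constructor
            · rintro (rfl | rfl)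
              · exact ⟨p.1, by omega, rfl⟩
              · exact ⟨p.1, by omega, by rw [he]⟩
            · rintro ⟨t, ht, rfl⟩
              by_cases hty : t = c.1
              · left; rw [hty]
              · right
                have h3 : t = y.1 := by omega
                rw [h3, he]
          · left
            refine ⟨c.2, c.1, y.1, by omega, ?_⟩
            ext p
            simp only [Finset.mem_insert, Finset.mem_singleton, Finset.mem_image,
              Finset.mem_Icc]
            constructor
            · rintro (rfl | rfl)
              · exact ⟨p.1, by omega, rfl⟩
              · exact ⟨p.1, by omega, by rw [he]⟩
            · rintro ⟨t, ht, rfl⟩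
              by_cases hty : t = c.1
              · left; rw [hty]
              · right
                have h3 : t = y.1 := by omega
                rw [h3, he]
        · intro p hp
          rcases Finset.mem_insert.1 hp with rfl | hp
          · exact hcP
          · rw [Finset.mem_singleton.1 hp]; exact hyP
      have hsub : I ⊆ ({c, y} : Finset Cell) := by
        rw [hIc]
        exact Finset.singleton_subset_iff.2 (Finset.mem_insert_self c {y})
      have heqI := hcd.1.2 _ hinner hsub
      rw [hIc] at heqI
      have hym : y ∈ ({c} : Finset Cell) := by
        rw [← heqI]
        exact Finset.mem_insert.2 (Or.inr (Finset.mem_singleton_self y))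
      exact hyc (Finset.mem_singleton.1 hym)
  -- Step 2: S-property bounds the card
  obtain ⟨x0, -, hx0uniq⟩ := hS I hcd.1
  have hsub : I ⊆ ({c, x0} : Finset Cell) := by
    intro d hd
    by_cases hdc : d = c
    · exact Finset.mem_insert.2 (Or.inl hdc)
    · have : d = x0 := hx0uniq d ⟨hd, collapse_single_cells hcd hIJ hd hdc⟩
      exact Finset.mem_insert.2 (Or.inr (Finset.mem_singleton.2 this))
  have hle : I.card ≤ 2 := by
    calc I.card ≤ ({c, x0} : Finset Cell).card := Finset.card_le_card hsub
    _ ≤ 2 := Finset.card_insert_le _ _ |>.trans (by simp)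
  obtain ⟨d, hdI, hdc⟩ := h2
  have hge : 2 ≤ I.card := by
    have hsub2 : ({c, d} : Finset Cell) ⊆ I := by
      intro p hp
      rcases Finset.mem_insert.1 hp with rfl | hp
      · exact hcI
      · rw [Finset.mem_singleton.1 hp]; exact hdI
    have : ({c, d} : Finset Cell).card = 2 := by
      rw [Finset.card_insert_of_notMem (by simp [Ne.symm hdc]), Finset.card_singleton]
    rw [← this]
    exact Finset.card_le_card hsub2
  omega
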